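/- arXiv:1308.5071 — 2 statements merged into one kernel-verified Lean document; each statement's English description precedes it below -/
import Mathlib

section
/- The function V(r) = r·coth(r) − log(sinh(r)) − log 2 is strictly convex on (0, ∞). -/
noncomputable def V (r : ℝ) : ℝ :=
  r * Real.cosh r / Real.sinh r - Real.log (Real.sinh r) - Real.log 2

lemma sinh_lt_mul_cosh {x : ℝ} (hx : 0 < x) : Real.sinh x < x * Real.cosh x := by
  have h : StrictMonoOn (fun y => y * Real.cosh y - Real.sinh y) (Set.Ici 0) := by
    apply strictMonoOn_of_deriv_pos (convex_Ici 0)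
    · fun_prop
    · intro y hy
      rw [interior_Ici] at hy
      have hd : HasDerivAt (fun y => y * Real.cosh y - Real.sinh y) (y * Real.sinh y) y := by
        have := ((hasDerivAt_id' y).mul (Real.hasDerivAt_cosh y)).sub (Real.hasDerivAt_sinh y)
        exact this.congr_deriv (by ring)
      rw [hd.deriv]
      exact mul_pos hy (Real.sinh_pos_iff.2 hy)
  have := h (Set.self_mem_Ici) (le_of_lt hx : (0:ℝ) ≤ x) hx
  simpa using this

lemma hasDerivAt_V {x : ℝ} (hx : 0 < x) :
    HasDerivAt V (-x / Real.sinh x ^ 2) x := by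
  have hs := Real.sinh_pos_iff.2 hx
  have h1 : HasDerivAt (fun r => r * Real.cosh r) (Real.cosh x + x * Real.sinh x) x := by
    have := (hasDerivAt_id' x).mul (Real.hasDerivAt_cosh x)
    exact this.congr_deriv (by ring)
  have h2 : HasDerivAt (fun r => r * Real.cosh r / Real.sinh r)
      (((Real.cosh x + x * Real.sinh x) * Real.sinh x -
        x * Real.cosh x * Real.cosh x) / Real.sinh x ^ 2) x :=
    h1.div (Real.hasDerivAt_sinh x) hs.ne'
  have h3 : HasDerivAt (fun r => Real.log (Real.sinh r)) (Real.cosh x / Real.sinh x) x :=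
    (Real.hasDerivAt_sinh x).log hs.ne'
  have h4 := (h2.sub h3).sub_const (Real.log 2)
  refine h4.congr_deriv ?_
  have hc := Real.cosh_sq x
  have hs' := hs.ne'
  field_simp
  linear_combination (-x) * hc

lemma hasDerivAt_g {x : ℝ} (hx : 0 < x) :
    HasDerivAt (fun r => -r / Real.sinh r ^ 2)
      (((-1) * Real.sinh x ^ 2 - (-x) * (2 * Real.sinh x * Real.cosh x)) /
        (Real.sinh x ^ 2) ^ 2) x := by
  have hs := Real.sinh_pos_iff.2 hx
  have hsq : HasDerivAt (fun r => Real.sinh r ^ 2) (2 * Real.sinh x * Real.cosh x) x := by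
    have := (Real.hasDerivAt_sinh x).pow 2
    exact this.congr_deriv (by norm_num)
  exact ((hasDerivAt_id x).neg).div hsq (by positivity)

theorem V_strictConvexOn : StrictConvexOn ℝ (Set.Ioi (0 : ℝ)) V := by
  have hgmono : StrictMonoOn (fun r => -r / Real.sinh r ^ 2) (Set.Ioi (0:ℝ)) := by
    apply strictMonoOn_of_deriv_pos (convex_Ioi 0)
    · intro x hx
      exact (hasDerivAt_g hx).continuousAt.continuousWithinAt
    · intro x hx
      rw [interior_Ioi] at hx
      rw [(hasDerivAt_g hx).deriv]
      have hs := Real.sinh_pos_iff.2 hx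
      have h2 := sinh_lt_mul_cosh hx
      have hc := Real.cosh_pos (x := x)
      apply div_pos _ (by positivity)
      nlinarith
  have heq : Set.EqOn (deriv V) (fun r => -r / Real.sinh r ^ 2) (Set.Ioi (0:ℝ)) := by
    intro x hx
    exact (hasDerivAt_V hx).deriv
  have hcont : ContinuousOn V (Set.Ioi (0:ℝ)) := fun x hx =>
    (hasDerivAt_V hx).continuousAt.continuousWithinAt
  refine StrictMonoOn.strictConvexOn_of_deriv (convex_Ioi 0) hcont ?_
  rw [interior_Ioi]
  exact hgmono.congr heq.symm
end

section
/- Diagonal argument for limsup inequalities: let M be a metric space, M₁ ⊆ M, and F_n, F : M → ℝ ∪ {±∞}. Suppose (i) for every v ∈ M₁ there exists a sequence (u_n) in M with u_n → v and limsup F_n(u_n) ≤ F(v), and (ii) for every u ∈ M there exists a sequence (v_n) in M₁ with v_n → u and limsup F(v_n) ≤ F(u). Then for every u ∈ M there exists a sequence (u_n) in M with u_n → u and limsup F_n(u_n) ≤ F(u). -/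
open Filter

theorem diagonal_argument {M : Type*} [MetricSpace M] (M₁ : Set M)
    (F : ℕ → M → EReal) (Flim : M → EReal)
    (h1 : ∀ v ∈ M₁, ∃ u : ℕ → M, Tendsto u atTop (nhds v) ∧
      limsup (fun n => F n (u n)) atTop ≤ Flim v)
    (h2 : ∀ u : M, ∃ v : ℕ → M, (∀ n, v n ∈ M₁) ∧ Tendsto v atTop (nhds u) ∧
      limsup (fun n => Flim (v n)) atTop ≤ Flim u) :
    ∀ u : M, ∃ w : ℕ → M, Tendsto w atTop (nhds u) ∧
      limsup (fun n => F n (w n)) atTop ≤ Flim u := by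
  intro u
  obtain ⟨v, hvM, hvtend, hvlim⟩ := h2 u
  choose uk huktend huklim using fun k => h1 (v k) (hvM k)
  set a : ℕ → EReal := fun k => Flim (v k) with ha
  set c : ℕ → EReal := fun k => max (a k) (-(k : EReal)) with hc
  set b : ℕ → EReal := fun k => c k + ((1 / (k + 1) : ℝ) : EReal) with hb
  -- eventually bound on F
  have hFb : ∀ k, ∀ᶠ n in atTop, F n (uk k n) ≤ b k := by
    intro k
    rcases eq_top_or_lt_top (a k) with htop | hlt
    · have hbk : b k = ⊤ := by
        have h1 : c k = ⊤ := by simp only [hc]; rw [htop]; simp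
        simp only [hb, h1]
        exact EReal.top_add_of_ne_bot (by simp)
      simp [hbk]
    · have hnegtop : -(k : EReal) ≠ ⊤ := by
        simp [EReal.neg_eq_top_iff, EReal.natCast_ne_bot]
      have hnegbot : (⊥ : EReal) < -(k : EReal) := by
        rw [bot_lt_iff_ne_bot]
        simp [EReal.neg_eq_bot_iff, EReal.natCast_ne_top]
      have hck : c k ≠ ⊤ := (max_lt hlt (hnegtop.lt_top)).ne
      have hck' : c k ≠ ⊥ := (hnegbot.trans_le (le_max_right _ _)).ne'
      obtain ⟨r, hr⟩ : ∃ r : ℝ, c k = (r : EReal) := ⟨(c k).toReal, (EReal.coe_toReal hck hck').symm⟩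
      have hak : a k < b k := by
        calc a k ≤ c k := le_max_left _ _
        _ < b k := by
            rw [hb]
            simp only [hr, ← EReal.coe_add, EReal.coe_lt_coe_iff]
            have : (0:ℝ) < 1 / (k+1) := by positivity
            linarith
      have := eventually_lt_of_limsup_lt ((huklim k).trans_lt hak)
      exact this.mono fun n hn => hn.le
  -- combine with distance
  have hcomb : ∀ k, ∃ N, ∀ n ≥ N, F n (uk k n) ≤ b k ∧ dist (uk k n) (v k) < 1 / (k + 1) := by
    intro k
    have hd : ∀ᶠ n in atTop, dist (uk k n) (v k) < 1 / (k + 1) := by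
      have := (huktend k)
      rw [Metric.tendsto_atTop] at this
      obtain ⟨N, hN⟩ := this (1 / (k + 1)) (by positivity)
      exact eventually_atTop.2 ⟨N, hN⟩
    exact eventually_atTop.1 ((hFb k).and hd)
  choose N hN using hcomb
  -- the diagonal indices
  set m : ℕ → ℕ := fun k => Nat.rec (N 0) (fun k mk => max (N (k+1)) (mk + 1)) k with hm
  have hmN : ∀ k, N k ≤ m k := by
    intro k; cases k with
    | zero => exact le_refl _
    | succ k => exact le_max_left _ _
  have hmmono : StrictMono m := by
    apply strictMono_nat_of_lt_succ
    intro k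
    exact lt_of_lt_of_le (Nat.lt_succ_self _) (le_max_right _ _)
  set K : ℕ → ℕ := fun n => Nat.findGreatest (fun k => m k ≤ n) n with hK
  have hKtend : Tendsto K atTop atTop := by
    rw [tendsto_atTop]
    intro k
    refine eventually_atTop.2 ⟨m k, fun n hn => ?_⟩
    exact Nat.le_findGreatest ((hmmono.le_apply).trans hn) hn
  have hKspec : ∀ n, m 0 ≤ n → m (K n) ≤ n := fun n hn =>
    Nat.findGreatest_spec (P := fun k => m k ≤ n) (Nat.zero_le n) hn
  refine ⟨fun n => uk (K n) n, ?_, ?_⟩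
  · -- convergence
    rw [tendsto_iff_dist_tendsto_zero]
    apply squeeze_zero' (Eventually.of_forall fun n => dist_nonneg)
      (g := fun n => 1 / (K n + 1) + dist (v (K n)) u)
    · filter_upwards [eventually_ge_atTop (m 0)] with n hn
      calc dist (uk (K n) n) u ≤ dist (uk (K n) n) (v (K n)) + dist (v (K n)) u :=
            dist_triangle _ _ _
      _ ≤ 1 / (K n + 1) + dist (v (K n)) u := by
          have := ((hN (K n)) n ((hmN (K n)).trans (hKspec n hn))).2
          linarith
    · have h1 : Tendsto (fun n => 1 / ((K n : ℝ) + 1)) atTop (nhds 0) :=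
        (tendsto_one_div_add_atTop_nhds_zero_nat).comp hKtend
      have h2 : Tendsto (fun n => dist (v (K n)) u) atTop (nhds 0) :=
        ((tendsto_iff_dist_tendsto_zero.1 hvtend).comp hKtend)
      simpa using h1.add h2
  · -- limsup bound
    have step1 : limsup (fun n => F n (uk (K n) n)) atTop ≤ limsup (fun n => b (K n)) atTop := by
      have hev : (fun n => F n (uk (K n) n)) ≤ᶠ[atTop] fun n => b (K n) := by
        filter_upwards [eventually_ge_atTop (m 0)] with n hn
        exact ((hN (K n)) n ((hmN (K n)).trans (hKspec n hn))).1
      exact limsup_le_limsup hev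
    have step2 : limsup (fun n => b (K n)) atTop ≤ limsup b atTop := by
      rw [show (fun n => b (K n)) = b ∘ K from rfl, limsup_comp]
      exact limsup_le_limsup_of_le (hKtend)
    have hceq : limsup c atTop ≤ limsup a atTop := by
      have hneg : limsup (fun k : ℕ => -(k : EReal)) atTop = ⊥ := by
        apply Tendsto.limsup_eq
        rw [EReal.tendsto_nhds_bot_iff_real]
        intro x
        filter_upwards [eventually_gt_atTop (Nat.ceil |x|)] with k hk
        have hxk : -x < (k : ℝ) := by
          have h1 : |x| < (k : ℝ) := lt_of_le_of_lt (Nat.le_ceil _) (by exact_mod_cast hk)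
          have := neg_abs_le x
          linarith
        have : ((-(k:ℝ) : ℝ) : EReal) < ((x : ℝ) : EReal) := by
          rw [EReal.coe_lt_coe_iff]; linarith
        simpa using this
      rw [hc, limsup_max, hneg]
      simp
    have heps : limsup (fun k : ℕ => ((1 / (k + 1) : ℝ) : EReal)) atTop = (0 : EReal) := by
      apply Tendsto.limsup_eq
      have h0 : Tendsto (fun k : ℕ => (1 / (k + 1) : ℝ)) atTop (nhds 0) :=
        tendsto_one_div_add_atTop_nhds_zero_nat
      have h3 := (continuous_coe_real_ereal.tendsto 0).comp h0
      simp only [Function.comp_def] at h3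
      simpa using h3
    have step3 : limsup b atTop ≤ limsup a atTop := by
      have := EReal.limsup_add_le (u := c) (v := fun k : ℕ => ((1 / (k + 1) : ℝ) : EReal))
        (f := atTop) (by rw [heps]; exact Or.inr (by simp)) (by rw [heps]; exact Or.inr (by simp))
      rw [heps, add_zero] at this
      exact le_trans this hceq
    exact step1.trans (step2.trans (step3.trans hvlim))
end
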